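/- Let R = F_2[x,y] with maximal ideal m = (x,y), and consider the ideals a_1 = (x), a_2 = (x + y²). For e ≥ 0 let V(2^e) = {(n_1,n_2) ∈ ℤ_{≥0}² : x^{n_1}(x+y²)^{n_2} ∉ (x^{2^e}, y^{2^e})}. Then lim_{e→∞} Card(V(2^e))/4^e = 3/4. -/

import Mathlib

open MvPolynomial

namespace Stmt18Aux

abbrev R2 := MvPolynomial (Fin 2) (ZMod 2)

noncomputable def Iq (q : ℕ) : Ideal R2 := Ideal.span ({(X 0) ^ q, (X 1) ^ q} : Set R2)

lemma X0_mem (q : ℕ) : (X 0 : R2) ^ q ∈ Iq q := Ideal.subset_span (by simp)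
lemma X1_mem (q : ℕ) : (X 1 : R2) ^ q ∈ Iq q := Ideal.subset_span (by simp)

lemma coeff_eq_zero_of_mem {q : ℕ} {f : R2} (hf : f ∈ Iq q)
    {m : Fin 2 →₀ ℕ} (h0 : m 0 < q) (h1 : m 1 < q) : coeff m f = 0 := by
  rw [Iq, Ideal.mem_span_pair] at hf
  obtain ⟨a, b, rfl⟩ := hf
  rw [coeff_add, X_pow_eq_monomial, X_pow_eq_monomial,
    coeff_mul_monomial', coeff_mul_monomial', if_neg, if_neg, add_zero]
  · intro h; have := Finsupp.single_le_iff.mp h; omega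
  · intro h; have := Finsupp.single_le_iff.mp h; omega

lemma coeff_mul_X1_sq (p : R2) (k : ℕ) :
    coeff (Finsupp.single 1 (2 * k + 2)) (p * (X 1) ^ 2) = coeff (Finsupp.single 1 (2 * k)) p := by
  rw [show (p * (X 1) ^ 2 : R2) = p * X 1 * X 1 by ring,
    coeff_mul_X', if_pos (by simp),
    show (Finsupp.single 1 (2 * k + 2) - Finsupp.single 1 1 : Fin 2 →₀ ℕ)
      = Finsupp.single 1 (2 * k + 1) by rw [← Finsupp.single_tsub]; congr 1,
    coeff_mul_X', if_pos (by simp),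
    show (Finsupp.single 1 (2 * k + 1) - Finsupp.single 1 1 : Fin 2 →₀ ℕ)
      = Finsupp.single 1 (2 * k) by rw [← Finsupp.single_tsub]; congr 1]

lemma coeff_aux (n : ℕ) :
    coeff (Finsupp.single 1 (2 * n)) (((X 0 : R2) + (X 1) ^ 2) ^ n) = 1 := by
  induction n with
  | zero => simp
  | succ n ih =>
    have hd : ((X 0 : R2) + (X 1) ^ 2) ^ (n + 1)
        = ((X 0 : R2) + (X 1) ^ 2) ^ n * X 0
          + ((X 0 : R2) + (X 1) ^ 2) ^ n * (X 1) ^ 2 := by ring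
    rw [show 2 * (n + 1) = 2 * n + 2 by ring, hd, coeff_add, coeff_mul_X', if_neg (by simp),
      coeff_mul_X1_sq, ih, zero_add]

lemma coeff_f (n1 n2 : ℕ) :
    coeff (Finsupp.single 0 n1 + Finsupp.single 1 (2 * n2))
      ((X 0 : R2) ^ n1 * ((X 0) + (X 1) ^ 2) ^ n2) = 1 := by
  rw [X_pow_eq_monomial, coeff_monomial_mul',
    if_pos (Finsupp.single_le_iff.mpr (by simp)),
    show (Finsupp.single 0 n1 + Finsupp.single 1 (2 * n2) - Finsupp.single 0 n1 : Fin 2 →₀ ℕ)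
      = Finsupp.single 1 (2 * n2) by simp, coeff_aux, mul_one]

lemma not_mem_case1 {q n1 n2 : ℕ} (h1 : n1 < q) (h2 : 2 * n2 < q) :
    (X 0 : R2) ^ n1 * ((X 0) + (X 1) ^ 2) ^ n2 ∉ Iq q := by
  intro hmem
  have h0 : ((Finsupp.single 0 n1 + Finsupp.single 1 (2 * n2) : Fin 2 →₀ ℕ)) 0 < q := by
    simpa using h1
  have h1' : ((Finsupp.single 0 n1 + Finsupp.single 1 (2 * n2) : Fin 2 →₀ ℕ)) 1 < q := by
    simpa using h2
  have := coeff_eq_zero_of_mem hmem h0 h1'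
  rw [coeff_f] at this
  exact one_ne_zero this

lemma freshman (j : ℕ) :
    ((X 0 : R2) + (X 1) ^ 2) ^ (2 ^ j) = (X 0) ^ (2 ^ j) + ((X 1) ^ (2 ^ j)) ^ 2 := by
  haveI : Fact (Nat.Prime 2) := ⟨Nat.prime_two⟩
  rw [add_pow_char_pow, ← pow_mul, ← pow_mul, mul_comm 2 (2 ^ j)]

lemma mem1 {q n1 : ℕ} (h : q ≤ n1) (c : R2) : (X 0 : R2) ^ n1 * c ∈ Iq q := by
  rw [show n1 = q + (n1 - q) by omega, pow_add, mul_assoc]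
  exact Ideal.mul_mem_right _ _ (X0_mem q)

lemma mem2 {e n1 n2 : ℕ} (h : 2 ^ (e + 1) ≤ n2) :
    (X 0 : R2) ^ n1 * ((X 0) + (X 1) ^ 2) ^ n2 ∈ Iq (2 ^ (e + 1)) := by
  have hs : (X 0 : R2) ^ n1 * ((X 0) + (X 1) ^ 2) ^ n2 =
      (X 0) ^ (2 ^ (e + 1)) * ((X 0) ^ n1 * ((X 0) + (X 1) ^ 2) ^ (n2 - 2 ^ (e + 1))) +
      (X 1) ^ (2 ^ (e + 1)) * ((X 1) ^ (2 ^ (e + 1)) *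
        ((X 0) ^ n1 * ((X 0) + (X 1) ^ 2) ^ (n2 - 2 ^ (e + 1)))) := by
    conv_lhs => rw [show n2 = 2 ^ (e + 1) + (n2 - 2 ^ (e + 1)) by omega]
    rw [pow_add, freshman (e + 1)]; ring
  rw [hs]
  exact Ideal.add_mem _ (Ideal.mul_mem_right _ _ (X0_mem _))
    (Ideal.mul_mem_right _ _ (X1_mem _))

lemma split3 (e n1 n2 : ℕ) (hb : 2 ^ e ≤ n2) :
    (X 0 : R2) ^ n1 * ((X 0) + (X 1) ^ 2) ^ n2 =
      (X 0) ^ (n1 + 2 ^ e) * ((X 0) + (X 1) ^ 2) ^ (n2 - 2 ^ e) +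
      (X 1) ^ (2 ^ (e + 1)) * ((X 0) ^ n1 * ((X 0) + (X 1) ^ 2) ^ (n2 - 2 ^ e)) := by
  conv_lhs => rw [show n2 = 2 ^ e + (n2 - 2 ^ e) by omega]
  rw [pow_add, freshman e,
    show (((X 1 : R2) ^ (2 ^ e)) ^ 2) = (X 1) ^ (2 ^ (e + 1)) by
      rw [← pow_mul, pow_succ 2 e],
    show ((X 0 : R2)) ^ (n1 + 2 ^ e) = (X 0) ^ n1 * (X 0) ^ (2 ^ e) from pow_add _ _ _]
  ring

lemma mem3 {e n1 n2 : ℕ} (ha : 2 ^ e ≤ n1) (hb : 2 ^ e ≤ n2) :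
    (X 0 : R2) ^ n1 * ((X 0) + (X 1) ^ 2) ^ n2 ∈ Iq (2 ^ (e + 1)) := by
  rw [split3 e n1 n2 hb]
  refine Ideal.add_mem _ (mem1 ?_ _) (Ideal.mul_mem_right _ _ (X1_mem _))
  rw [pow_succ]; omega

lemma notmem2 {e n1 n2 : ℕ} (h1 : n1 < 2 ^ e) (h2 : 2 ^ e ≤ n2) (h3 : n2 < 2 ^ (e + 1)) :
    (X 0 : R2) ^ n1 * ((X 0) + (X 1) ^ 2) ^ n2 ∉ Iq (2 ^ (e + 1)) := by
  have hq : (2 : ℕ) ^ (e + 1) = 2 * 2 ^ e := by rw [pow_succ]; ring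
  intro hmem
  rw [split3 e n1 n2 h2] at hmem
  have h2nd : (X 1 : R2) ^ (2 ^ (e + 1)) *
      ((X 0) ^ n1 * ((X 0) + (X 1) ^ 2) ^ (n2 - 2 ^ e)) ∈ Iq (2 ^ (e + 1)) :=
    Ideal.mul_mem_right _ _ (X1_mem _)
  have h1st := (Ideal.add_mem_iff_left _ h2nd).mp (by rwa [add_comm] at hmem)
  exact not_mem_case1 (q := 2 ^ (e + 1)) (by omega) (by omega) h1st

lemma key (e n1 n2 : ℕ) :
    ((X 0 : R2) ^ n1 * ((X 0) + (X 1) ^ 2) ^ n2 ∉ Iq (2 ^ (e + 1))) ↔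
      ((n1 < 2 ^ (e + 1) ∧ n2 < 2 ^ e) ∨ (n1 < 2 ^ e ∧ 2 ^ e ≤ n2 ∧ n2 < 2 ^ (e + 1))) := by
  have hq : (2 : ℕ) ^ (e + 1) = 2 * 2 ^ e := by rw [pow_succ]; ring
  constructor
  · intro hnm
    by_contra hc
    push_neg at hc
    apply hnm
    rcases (by omega : 2 ^ (e + 1) ≤ n1 ∨ 2 ^ (e + 1) ≤ n2 ∨ (2 ^ e ≤ n1 ∧ 2 ^ e ≤ n2)) with
      h1 | h2 | ⟨ha, hb⟩
    · exact mem1 h1 _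
    · exact mem2 h2
    · exact mem3 ha hb
  · rintro (⟨h1, h2⟩ | ⟨h1, h2, h3⟩)
    · exact not_mem_case1 h1 (by omega)
    · exact notmem2 h1 h2 h3

lemma count (e : ℕ) :
    Set.ncard {n : ℕ × ℕ |
        (X 0 : R2) ^ n.1 * (X 0 + (X 1) ^ 2) ^ n.2 ∉ Iq (2 ^ (e + 1))} = 3 * 4 ^ e := by
  have hset : {n : ℕ × ℕ |
        (X 0 : R2) ^ n.1 * (X 0 + (X 1) ^ 2) ^ n.2 ∉ Iq (2 ^ (e + 1))} =
      ↑((Finset.range (2 ^ (e + 1)) ×ˢ Finset.range (2 ^ e)) ∪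
        (Finset.range (2 ^ e) ×ˢ Finset.Ico (2 ^ e) (2 ^ (e + 1)))) := by
    ext ⟨n1, n2⟩
    simp only [Set.mem_setOf_eq, key, Finset.coe_union, Set.mem_union, Finset.coe_product,
      Set.mem_prod, Finset.mem_coe, Finset.mem_range, Finset.mem_Ico]
  have hdisj : Disjoint (Finset.range (2 ^ (e + 1)) ×ˢ Finset.range (2 ^ e))
      (Finset.range (2 ^ e) ×ˢ Finset.Ico (2 ^ e) (2 ^ (e + 1))) := by
    rw [Finset.disjoint_left]
    rintro ⟨a, b⟩ hab hab'
    rw [Finset.mem_product, Finset.mem_range, Finset.mem_range] at hab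
    rw [Finset.mem_product, Finset.mem_range, Finset.mem_Ico] at hab'
    omega
  rw [hset, Set.ncard_coe_finset, Finset.card_union_of_disjoint hdisj, Finset.card_product,
    Finset.card_product, Finset.card_range, Finset.card_range, Nat.card_Ico]
  have h4 : (4 : ℕ) ^ e = 2 ^ e * 2 ^ e := by
    rw [show (4 : ℕ) = 2 * 2 from rfl, mul_pow]
  have hq : (2 : ℕ) ^ (e + 1) = 2 * 2 ^ e := by rw [pow_succ]; ring
  rw [hq, h4, show 2 * 2 ^ e - 2 ^ e = 2 ^ e from by omega]
  ring

end Stmt18Aux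

theorem stmt18 :
    Filter.Tendsto
      (fun e : ℕ =>
        (Set.ncard {n : ℕ × ℕ |
            (X 0 : MvPolynomial (Fin 2) (ZMod 2)) ^ n.1 * (X 0 + (X 1) ^ 2) ^ n.2 ∉
              Ideal.span ({(X 0) ^ (2 ^ e), (X 1) ^ (2 ^ e)} :
                Set (MvPolynomial (Fin 2) (ZMod 2)))} : ℝ) / 4 ^ e)
      Filter.atTop (nhds (3 / 4)) := by
  apply Filter.Tendsto.congr' _ (tendsto_const_nhds (x := (3 / 4 : ℝ)))
  filter_upwards [Filter.eventually_ge_atTop 1] with e he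
  obtain ⟨e', rfl⟩ : ∃ e', e = e' + 1 := ⟨e - 1, by omega⟩
  have hcount := Stmt18Aux.count e'
  rw [Stmt18Aux.Iq] at hcount
  rw [hcount]
  push_cast
  rw [pow_succ]
  have h4 : (4 : ℝ) ^ e' ≠ 0 := by positivity
  field_simp
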